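/- For all integers d ≥ 1 and a ≥ 1, one has E(d+1, a) < (2a+1) · E(d, a). -/

import Mathlib

/-- `ExtFibPts d k` : the number of integer points `x = (x_1, …, x_d)` with
`|x_i| ≤ k` and `|x_i| + |x_{i+1}| ≤ k` for consecutive indices, i.e. the number of
lattice points in the `k`-th dilation of the `d`-dimensional extended Fibonacci polytope. -/
noncomputable def ExtFibPts (d k : ℕ) : ℕ :=
  Set.ncard {x : Fin d → ℤ | (∀ i, |x i| ≤ (k : ℤ)) ∧
    ∀ i j : Fin d, (j : ℕ) = (i : ℕ) + 1 → |x i| + |x j| ≤ (k : ℤ)}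

private lemma extFib_finite (d k : ℕ) :
    {x : Fin d → ℤ | (∀ i, |x i| ≤ (k : ℤ)) ∧
      ∀ i j : Fin d, (j : ℕ) = (i : ℕ) + 1 → |x i| + |x j| ≤ (k : ℤ)}.Finite := by
  apply Set.Finite.subset (Set.Finite.pi fun _ : Fin d => Set.finite_Icc (-(k : ℤ)) k)
  intro x hx
  simp only [Set.mem_pi, Set.mem_univ, Set.mem_Icc, forall_true_left]
  intro i
  exact abs_le.mp (hx.1 i)

private lemma ncard_prod' (s : Set α) (t : Set β) :
    (s ×ˢ t).ncard = s.ncard * t.ncard := by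
  rw [← Nat.card_coe_set_eq, Nat.card_congr (Equiv.Set.prod s t), Nat.card_prod,
    Nat.card_coe_set_eq, Nat.card_coe_set_eq]

theorem stmt9 (d a : ℕ) (hd : 1 ≤ d) (ha : 1 ≤ a) :
    ExtFibPts (d+1) a < (2*a+1) * ExtFibPts d a := by
  classical
  set S1 := {x : Fin (d+1) → ℤ | (∀ i, |x i| ≤ (a : ℤ)) ∧
    ∀ i j : Fin (d+1), (j : ℕ) = (i : ℕ) + 1 → |x i| + |x j| ≤ (a : ℤ)} with hS1
  set S0 := {x : Fin d → ℤ | (∀ i, |x i| ≤ (a : ℤ)) ∧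
    ∀ i j : Fin d, (j : ℕ) = (i : ℕ) + 1 → |x i| + |x j| ≤ (a : ℤ)} with hS0
  set f : (Fin (d+1) → ℤ) → (Fin d → ℤ) × ℤ :=
    fun x => (fun i => x i.castSucc, x (Fin.last d)) with hf
  have hinj : Function.Injective f := by
    intro x y h
    funext i
    refine Fin.lastCases ?_ (fun j => ?_) i
    · exact congrArg Prod.snd h
    · exact congrFun (congrArg Prod.fst h) j
  set T := S0 ×ˢ Set.Icc (-(a : ℤ)) (a : ℤ) with hT
  have hTfin : T.Finite := (extFib_finite d a).prod (Set.finite_Icc _ _)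
  -- the witness
  set y : Fin d → ℤ := fun i => if (i : ℕ) = d - 1 then (a : ℤ) else 0 with hy
  have hyS0 : y ∈ S0 := by
    constructor
    · intro i
      by_cases h : (i : ℕ) = d - 1 <;> simp [hy, h]
    · intro i j hij
      have : (i : ℕ) ≠ d - 1 := by
        intro h
        have := j.isLt
        omega
      by_cases h2 : (j : ℕ) = d - 1 <;> simp [hy, this, h2]
  have hyT : (y, (a : ℤ)) ∈ T := by
    exact ⟨hyS0, by simp⟩
  have hynot : (y, (a : ℤ)) ∉ f '' S1 := by
    rintro ⟨x, hx, hfx⟩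
    have h1 : x (Fin.last d) = (a : ℤ) := congrArg Prod.snd hfx
    have hd1 : d - 1 < d := by omega
    have h2 : x (Fin.castSucc ⟨d - 1, hd1⟩) = (a : ℤ) := by
      have := congrFun (congrArg Prod.fst hfx) ⟨d - 1, hd1⟩
      simpa [hy, hf] using this
    have h3 := hx.2 (Fin.castSucc ⟨d - 1, hd1⟩) (Fin.last d) (by simp; omega)
    rw [h1, h2] at h3
    have : |(a : ℤ)| = (a : ℤ) := abs_of_nonneg (by positivity)
    rw [this] at h3
    have : (1 : ℤ) ≤ (a : ℤ) := by exact_mod_cast ha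
    omega
  have hsub : f '' S1 ⊆ T := by
    rintro _ ⟨x, hx, rfl⟩
    refine ⟨⟨fun i => hx.1 _, fun i j hij => hx.2 _ _ (by simpa using hij)⟩, ?_⟩
    simpa [Set.mem_Icc] using abs_le.mp (hx.1 (Fin.last d))
  have hssub : f '' S1 ⊂ T := ⟨hsub, fun h => hynot (h hyT)⟩
  have hlt : (f '' S1).ncard < T.ncard := Set.ncard_lt_ncard hssub hTfin
  have hIcc : (Set.Icc (-(a : ℤ)) (a : ℤ)).ncard = 2 * a + 1 := by
    rw [← Finset.coe_Icc, Set.ncard_coe_finset, Int.card_Icc]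
    omega
  calc ExtFibPts (d+1) a = (f '' S1).ncard := (Set.ncard_image_of_injective _ hinj).symm
    _ < T.ncard := hlt
    _ = (2*a+1) * ExtFibPts d a := by
        rw [hT, ncard_prod', hIcc, ExtFibPts, Nat.mul_comm]
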